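/- For every natural number n, the normal ordering (X + q s D_q)(X + q³ s D_q) ⋯ (X + q^{2n-1} s D_q) = Σ_{m=0}^{n} Σ_{j=0}^{min(m,n-m)} q^{n² + j² - (m+j)n} · [n]_q! · s^{n-m} / ((1+q)(1+q²)⋯(1+q^j) · [j]_q! · [m-j]_q! · [n-m-j]_q!) · X^{m-j} D_q^{n-m-j} holds as an identity of operators on the polynomial ring. -/
import Mathlib


noncomputable section

/-- The field `ℚ(q,s)` of rational functions in two indeterminates. -/
abbrev F : Type := FractionRing (MvPolynomial (Fin 2) ℚ)

/-- The indeterminate `q`. -/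
def q : F := algebraMap (MvPolynomial (Fin 2) ℚ) F (MvPolynomial.X 0)

/-- The indeterminate `s`. -/
def s : F := algebraMap (MvPolynomial (Fin 2) ℚ) F (MvPolynomial.X 1)

/-- The q-integer `[n]_q = 1 + q + ⋯ + q^{n-1}`. -/
def qInt (n : ℕ) : F := ∑ i ∈ Finset.range n, q ^ i

/-- The q-factorial `[n]_q! = ∏_{k=1}^n [k]_q`. -/
def qFact (n : ℕ) : F := ∏ k ∈ Finset.range n, qInt (k + 1)

/-- The q-binomial coefficient `[n choose k]_q = [n]_q!/([k]_q! [n-k]_q!)`. -/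
def qBinom (n k : ℕ) : F := qFact n / (qFact k * qFact (n - k))

/-- The operator `X` of multiplication by `x` on `F[x]`. -/
def Xop : Module.End F (Polynomial F) := LinearMap.mulLeft F Polynomial.X

/-- Division by `x` (discarding the constant term), as a linear map. -/
def divXL : Polynomial F →ₗ[F] Polynomial F where
  toFun := Polynomial.divX
  map_add' p r := Polynomial.divX_add
  map_smul' a p := by
    ext n
    simp [Polynomial.coeff_divX, Polynomial.coeff_smul]

/-- The q-derivative `D_q f(x) = (f(qx) - f(x))/((q-1)x)`; it is the F-linear
operator on `F[x]` determined by `D_q x^n = [n]_q x^{n-1}`. -/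
def Dq : Module.End F (Polynomial F) :=
  (q - 1)⁻¹ •
    (divXL ∘ₗ
      ((Polynomial.aeval (Polynomial.C q * Polynomial.X)).toLinearMap - LinearMap.id))

/-- The polynomials `h_n(x,t) = Σ_j q^{j²} t^j [n]_q!/((1+q)⋯(1+q^j)·[j]_q!·[n-2j]_q!)
x^{n-2j}` (the parameter `t` will be specialized to `s` or `q²s`). -/
def h (t : F) (n : ℕ) : Polynomial F :=
  ∑ j ∈ Finset.range (n / 2 + 1),
    Polynomial.C (q ^ (j ^ 2) * t ^ j * qFact n /
        ((∏ i ∈ Finset.range j, (1 + q ^ (i + 1))) * qFact j * qFact (n - 2 * j))) *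
      Polynomial.X ^ (n - 2 * j)


/-- `G(n) = (X + q s D_q)(X + q³ s D_q) ⋯ (X + q^{2n-1} s D_q)`,
with the factor `(X + q^{2n-1} s D_q)` acting first. -/
def Gop : ℕ → Module.End F (Polynomial F)
  | 0 => 1
  | n + 1 => Gop n * (Xop + (q ^ (2 * n + 1) * s) • Dq)

open Finset Polynomial
set_option maxHeartbeats 1000000
set_option synthInstance.maxHeartbeats 1000000

lemma algMap_ne_zero {p : MvPolynomial (Fin 2) ℚ} (h : p ≠ 0) :
    algebraMap (MvPolynomial (Fin 2) ℚ) F p ≠ 0 := by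
  intro hz
  exact h (IsFractionRing.injective (MvPolynomial (Fin 2) ℚ) F (by simpa using hz))

lemma ne_zero_of_eval {p : MvPolynomial (Fin 2) ℚ} (v : Fin 2 → ℚ)
    (h : MvPolynomial.eval v p ≠ 0) : algebraMap (MvPolynomial (Fin 2) ℚ) F p ≠ 0 := by
  apply algMap_ne_zero; intro hz; simp [hz] at h

lemma qInt_eq (k : ℕ) : qInt k =
    algebraMap (MvPolynomial (Fin 2) ℚ) F (∑ i ∈ range k, MvPolynomial.X 0 ^ i) := by
  simp [qInt, q, map_sum, map_pow]

lemma qInt_succ_ne_zero (k : ℕ) : qInt (k+1) ≠ 0 := by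
  rw [qInt_eq]
  apply ne_zero_of_eval (fun _ => 1)
  simp [map_sum]
  positivity

lemma q_ne_zero : q ≠ 0 := by
  apply ne_zero_of_eval (fun i => if i = 0 then 1 else 0)
  simp

lemma q_sub_one_ne_zero : q - 1 ≠ 0 := by
  have : q - 1 = algebraMap (MvPolynomial (Fin 2) ℚ) F (MvPolynomial.X 0 - 1) := by
    simp [q, map_sub]
  rw [this]
  apply ne_zero_of_eval (fun _ => 0)
  simp

lemma one_add_q_pow_ne_zero (k : ℕ) : (1 : F) + q ^ (k+1) ≠ 0 := by
  have : (1:F) + q ^ (k+1) = algebraMap (MvPolynomial (Fin 2) ℚ) F (1 + MvPolynomial.X 0 ^ (k+1)) := by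
    simp [q, map_add, map_pow]
  rw [this]
  apply ne_zero_of_eval (fun _ => 1)
  simp

lemma qFact_ne_zero (k : ℕ) : qFact k ≠ 0 :=
  Finset.prod_ne_zero_iff.2 fun i _ => qInt_succ_ne_zero i

def Eprod (j : ℕ) : F := ∏ i ∈ Finset.range j, (1 + q ^ (i + 1))

lemma Eprod_ne_zero (j : ℕ) : Eprod j ≠ 0 :=
  Finset.prod_ne_zero_iff.2 fun i _ => one_add_q_pow_ne_zero i

lemma qInt_add (m k : ℕ) : qInt (m + k) = qInt m + q ^ m * qInt k := by
  simp [qInt, Finset.sum_range_add, Finset.mul_sum, pow_add]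

lemma qFact_succ (k : ℕ) : qFact (k+1) = qFact k * qInt (k+1) := by
  simp [qFact, Finset.prod_range_succ]

lemma Eprod_succ (j : ℕ) : Eprod (j+1) = Eprod j * (1 + q ^ (j+1)) := by
  simp [Eprod, Finset.prod_range_succ]


lemma divX_X_pow (k : ℕ) : (Polynomial.X ^ (k+1) : Polynomial F).divX = Polynomial.X ^ k := by
  ext n
  simp only [Polynomial.coeff_divX, Polynomial.coeff_X_pow]
  have : (n + 1 = k + 1) ↔ (n = k) := by omega
  simp [this]

lemma Dq_X_pow (k : ℕ) : Dq (Polynomial.X ^ k : Polynomial F) = qInt k • Polynomial.X ^ (k-1) := by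
  have hgeom : (q:F) ^ k - 1 = qInt k * (q - 1) := (geom_sum_mul q k).symm
  simp only [Dq, LinearMap.smul_apply, LinearMap.comp_apply, LinearMap.sub_apply,
    AlgHom.toLinearMap_apply, LinearMap.id_apply, map_pow, Polynomial.aeval_X]
  rw [mul_pow, ← Polynomial.C_pow]
  have h1 : (Polynomial.C (q ^ k) * Polynomial.X ^ k - Polynomial.X ^ k : Polynomial F)
      = Polynomial.C (q ^ k - 1) * Polynomial.X ^ k := by
    rw [map_sub, sub_mul, Polynomial.C_1, one_mul]
  rw [h1, hgeom]
  cases k with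
  | zero =>
    show (q - 1)⁻¹ • (Polynomial.C (qInt 0 * (q-1)) * Polynomial.X ^ 0).divX = _
    simp [qInt]
  | succ k =>
    show (q - 1)⁻¹ • (Polynomial.C (qInt (k+1) * (q-1)) * Polynomial.X ^ (k+1)).divX = _
    rw [Polynomial.divX_C_mul, divX_X_pow]
    rw [Polynomial.smul_eq_C_mul, Polynomial.smul_eq_C_mul, ← mul_assoc, ← map_mul]
    congr 2
    rw [mul_comm (qInt (k+1)), ← mul_assoc, inv_mul_cancel₀ q_sub_one_ne_zero, one_mul]

lemma End_ext {A B : Module.End F (Polynomial F)}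
    (hext : ∀ k, A (Polynomial.X ^ k) = B (Polynomial.X ^ k)) : A = B := by
  apply LinearMap.ext
  intro p
  induction p using Polynomial.induction_on' with
  | add p r hp hr => simp [map_add, hp, hr]
  | monomial n a => rw [← Polynomial.smul_X_eq_monomial, map_smul, map_smul, hext]

lemma Dq_mul_Xop : Dq * Xop = 1 + q • (Xop * Dq) := by
  apply End_ext
  intro k
  have hX : ∀ (p : Polynomial F), Xop p = Polynomial.X * p := fun p => rfl
  have hpow : ∀ (j:ℕ), (Polynomial.X : Polynomial F) * Polynomial.X ^ j
      = Polynomial.X ^ (j+1) := fun j => (pow_succ' Polynomial.X j).symm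
  simp only [Module.End.mul_apply, LinearMap.add_apply, LinearMap.smul_apply,
    Module.End.one_apply, hX, hpow, Dq_X_pow, Nat.add_sub_cancel]
  cases k with
  | zero => simp [qInt]
  | succ k =>
    rw [show (k+1) - 1 = k from rfl, mul_smul_comm, hpow, smul_smul]
    rw [show k+1+1 = 1 + (k+1) by omega, qInt_add, add_smul, pow_one]
    simp [qInt]


lemma Dq_pow_succ_mul_Xop : ∀ b : ℕ, Dq^(b+1) * Xop
    = qInt (b+1) • Dq^b + q^(b+1) • (Xop * Dq^(b+1))
  | 0 => by simpa [qInt] using Dq_mul_Xop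
  | (b+1) => by
    have h : Dq^(b+1+1) * Xop = Dq * (Dq^(b+1) * Xop) := by
      rw [← mul_assoc, ← pow_succ']
    rw [h, Dq_pow_succ_mul_Xop b, mul_add, mul_smul_comm, mul_smul_comm,
      ← mul_assoc, Dq_mul_Xop, add_mul, one_mul, smul_mul_assoc, mul_assoc,
      ← pow_succ', ← pow_succ', smul_add, smul_smul]
    have hq : qInt (b+1+1) = qInt (b+1) + q^(b+1) := by
      rw [qInt_add (b+1) 1]; simp [qInt]
    rw [hq, add_smul]
    have hqq : q^(b+1) * q = q^(b+1+1) := by ring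
    rw [hqq]
    abel

lemma Dq_pow_mul_Xop (b : ℕ) : Dq^b * Xop
    = qInt b • Dq^(b-1) + q^b • (Xop * Dq^b) := by
  cases b with
  | zero => simp [qInt]
  | succ b => simpa using Dq_pow_succ_mul_Xop b


lemma qInt_zero : qInt 0 = 0 := by simp [qInt]

def cf (n a b j : ℕ) : F :=
  q^(n*b + j^2) * qFact n * s^(b+j) / (Eprod j * qFact j * qFact a * qFact b)

def cc (n a b j : ℕ) : F := if a + b + 2*j = n then cf n a b j else 0

lemma cfL1 (n a b j : ℕ) : cf (n+1) a b j = (q^b * qInt (n+1)) * cf n a b j := by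
  simp only [cf, qFact_succ]
  field_simp
  ring

lemma cfL2 (n a b j : ℕ) : (q^(2*n+1)*s) * cf n a b j
    = (q^(n+1) * qInt (b+1)) * cf n a (b+1) j := by
  simp only [cf, qFact_succ]
  rw [← mul_div_assoc, ← mul_div_assoc, div_eq_div_iff]
  · ring
  · exact mul_ne_zero (mul_ne_zero (mul_ne_zero (Eprod_ne_zero j) (qFact_ne_zero j))
      (qFact_ne_zero a)) (qFact_ne_zero b)
  · exact mul_ne_zero (mul_ne_zero (mul_ne_zero (Eprod_ne_zero j) (qFact_ne_zero j))
      (qFact_ne_zero a)) (mul_ne_zero (qFact_ne_zero b) (qInt_succ_ne_zero b))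

lemma cfL3 (n a b j : ℕ) : q^b * cf n a b j
    = (q^b * qInt (a+1)) * cf n (a+1) b j := by
  simp only [cf, qFact_succ]
  rw [← mul_div_assoc, ← mul_div_assoc, div_eq_div_iff]
  · ring
  · exact mul_ne_zero (mul_ne_zero (mul_ne_zero (Eprod_ne_zero j) (qFact_ne_zero j))
      (qFact_ne_zero a)) (qFact_ne_zero b)
  · exact mul_ne_zero (mul_ne_zero (mul_ne_zero (Eprod_ne_zero j)
      (qFact_ne_zero j)) (mul_ne_zero (qFact_ne_zero a) (qInt_succ_ne_zero a))) (qFact_ne_zero b)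

lemma cfL4 (n a b j : ℕ) (h : a + b + 2*(j+1) = n + 1) :
    qInt (b+1) * cf n a (b+1) j
    = (q^(a+b) * ((1+q^(j+1)) * qInt (j+1))) * cf n a b (j+1) := by
  have hn : n = a + b + 2*j + 1 := by omega
  subst hn
  simp only [cf, qFact_succ, Eprod_succ]
  rw [← mul_div_assoc, ← mul_div_assoc, div_eq_div_iff]
  · ring
  · exact mul_ne_zero (mul_ne_zero (mul_ne_zero (Eprod_ne_zero j) (qFact_ne_zero j))
      (qFact_ne_zero a)) (mul_ne_zero (qFact_ne_zero b) (qInt_succ_ne_zero b))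
  · exact mul_ne_zero (mul_ne_zero (mul_ne_zero
      (mul_ne_zero (Eprod_ne_zero j) (one_add_q_pow_ne_zero j))
      (mul_ne_zero (qFact_ne_zero j) (qInt_succ_ne_zero j))) (qFact_ne_zero a)) (qFact_ne_zero b)

lemma qInt_key (a b j : ℕ) : q^b * qInt (a+b+2*j)
    = q^(a+b+2*j) * qInt b + q^b * qInt a + q^(a+b) * ((1+q^j) * qInt j) := by
  have h2j : qInt (2*j) = (1+q^j) * qInt j := by
    rw [two_mul, qInt_add]; ring
  rw [show a+b+2*j = a + (2*j + b) by omega, qInt_add a (2*j+b), qInt_add (2*j) b, h2j]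
  ring

lemma cc_rec (n a b j : ℕ) : cc (n+1) a b j =
    (if b = 0 then 0 else (q^(2*n+1)*s) * cc n a (b-1) j)
  + (if a = 0 then 0 else q^b * cc n (a-1) b j)
  + (if j = 0 then 0 else qInt (b+1) * cc n a (b+1) (j-1)) := by
  by_cases h : a + b + 2*j = n+1
  · have hcf : cc (n+1) a b j = (q^b * qInt (n+1)) * cf n a b j := by
      rw [cc, if_pos h, cfL1]
    have h1 : (if b = 0 then (0:F) else (q^(2*n+1)*s) * cc n a (b-1) j)
        = (q^(n+1) * qInt b) * cf n a b j := by
      cases b with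
      | zero => simp [qInt_zero]
      | succ b' =>
        rw [if_neg (Nat.succ_ne_zero b'), Nat.succ_sub_one, cc, if_pos (by omega), cfL2]
    have h2 : (if a = 0 then (0:F) else q^b * cc n (a-1) b j)
        = (q^b * qInt a) * cf n a b j := by
      cases a with
      | zero => simp [qInt_zero]
      | succ a' =>
        rw [if_neg (Nat.succ_ne_zero a'), Nat.succ_sub_one, cc, if_pos (by omega), cfL3]
    have h3 : (if j = 0 then (0:F) else qInt (b+1) * cc n a (b+1) (j-1))
        = (q^(a+b) * ((1+q^j) * qInt j)) * cf n a b j := by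
      cases j with
      | zero => simp [qInt_zero]
      | succ j' =>
        rw [if_neg (Nat.succ_ne_zero j'), Nat.succ_sub_one, cc, if_pos (by omega),
          cfL4 n a b j' (by omega)]
    rw [hcf, h1, h2, h3, ← add_mul, ← add_mul]
    have key := qInt_key a b j
    rw [h] at key
    rw [key]
  · rw [cc, if_neg h]
    have h1 : (if b = 0 then (0:F) else (q^(2*n+1)*s) * cc n a (b-1) j) = 0 := by
      cases b with
      | zero => simp
      | succ b' => rw [if_neg (Nat.succ_ne_zero b'), Nat.succ_sub_one, cc,
          if_neg (by omega), mul_zero]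
    have h2 : (if a = 0 then (0:F) else q^b * cc n (a-1) b j) = 0 := by
      cases a with
      | zero => simp
      | succ a' => rw [if_neg (Nat.succ_ne_zero a'), Nat.succ_sub_one, cc,
          if_neg (by omega), mul_zero]
    have h3 : (if j = 0 then (0:F) else qInt (b+1) * cc n a (b+1) (j-1)) = 0 := by
      cases j with
      | zero => simp
      | succ j' => rw [if_neg (Nat.succ_ne_zero j'), Nat.succ_sub_one, cc,
          if_neg (by omega), mul_zero]
    rw [h1, h2, h3]
    simp


def Mop (a b : ℕ) : Module.End F (Polynomial F) := Xop^a * Dq^b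

def T (n : ℕ) : Module.End F (Polynomial F) :=
  ∑ a ∈ Finset.range (n+1), ∑ b ∈ Finset.range (n+1), ∑ j ∈ Finset.range (n+1),
    cc n a b j • Mop a b

lemma cc_eq_zero {n a b j : ℕ} (h : a + b + 2*j ≠ n) : cc n a b j = 0 := if_neg h

lemma expand_factor (n a b j : ℕ) :
    (cc n a b j • Mop a b) * (Xop + (q^(2*n+1) * s) • Dq)
    = (qInt b * cc n a b j) • Mop a (b-1) + (q^b * cc n a b j) • Mop (a+1) b
      + ((q^(2*n+1)*s) * cc n a b j) • Mop a (b+1) := by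
  simp only [Mop, mul_add]
  rw [smul_mul_assoc, mul_assoc, Dq_pow_mul_Xop, mul_add, mul_smul_comm, mul_smul_comm,
    ← mul_assoc (Xop^a) Xop, ← pow_succ, smul_add, smul_smul, smul_smul]
  rw [smul_mul_assoc, mul_smul_comm, smul_smul, mul_assoc, ← pow_succ]
  rw [mul_comm (cc n a b j) (qInt b), mul_comm (cc n a b j) (q^b),
    mul_comm (cc n a b j) (q^(2*n+1)*s)]


lemma T_succ (n : ℕ) : T n * (Xop + (q^(2*n+1) * s) • Dq) = T (n+1) := by
  classical
  -- LHS expansion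
  have lhs_eq : T n * (Xop + (q^(2*n+1) * s) • Dq)
      = (∑ a ∈ Finset.range (n+1), ∑ b ∈ Finset.range (n+1), ∑ j ∈ Finset.range (n+1),
          (qInt b * cc n a b j) • Mop a (b-1))
      + (∑ a ∈ Finset.range (n+1), ∑ b ∈ Finset.range (n+1), ∑ j ∈ Finset.range (n+1),
          (q^b * cc n a b j) • Mop (a+1) b)
      + (∑ a ∈ Finset.range (n+1), ∑ b ∈ Finset.range (n+1), ∑ j ∈ Finset.range (n+1),
          ((q^(2*n+1)*s) * cc n a b j) • Mop a (b+1)) := by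
    rw [T]
    simp only [Finset.sum_mul, expand_factor, Finset.sum_add_distrib]
  -- shift the first (contraction) piece
  have hA : (∑ a ∈ Finset.range (n+1), ∑ b ∈ Finset.range (n+1), ∑ j ∈ Finset.range (n+1),
          (qInt b * cc n a b j) • Mop a (b-1))
      = ∑ a ∈ Finset.range (n+1), ∑ b ∈ Finset.range (n+1), ∑ j ∈ Finset.range (n+1),
          (qInt (b+1) * cc n a (b+1) j) • Mop a b := by
    refine Finset.sum_congr rfl fun a _ => ?_
    rw [Finset.sum_range_succ'
      (fun b => ∑ j ∈ Finset.range (n+1), (qInt b * cc n a b j) • Mop a (b-1)) n]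
    rw [Finset.sum_range_succ
      (fun b => ∑ j ∈ Finset.range (n+1), (qInt (b+1) * cc n a (b+1) j) • Mop a b) n]
    have h0 : (∑ j ∈ Finset.range (n+1), (qInt 0 * cc n a 0 j) • Mop a (0-1)) = 0 := by
      simp [qInt_zero]
    have hn : (∑ j ∈ Finset.range (n+1), (qInt (n+1) * cc n a (n+1) j) • Mop a n) = 0 :=
      Finset.sum_eq_zero fun j _ => by
        rw [cc_eq_zero (by omega), mul_zero, zero_smul]
    rw [h0, hn, add_zero, add_zero]
    simp only [Nat.add_sub_cancel]
  -- RHS expansion via the coefficient recurrence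
  have rhs_eq : T (n+1)
      = (∑ a ∈ Finset.range (n+2), ∑ b ∈ Finset.range (n+2), ∑ j ∈ Finset.range (n+2),
          (if b = 0 then 0 else (q^(2*n+1)*s) * cc n a (b-1) j) • Mop a b)
      + (∑ a ∈ Finset.range (n+2), ∑ b ∈ Finset.range (n+2), ∑ j ∈ Finset.range (n+2),
          (if a = 0 then 0 else q^b * cc n (a-1) b j) • Mop a b)
      + (∑ a ∈ Finset.range (n+2), ∑ b ∈ Finset.range (n+2), ∑ j ∈ Finset.range (n+2),
          (if j = 0 then 0 else qInt (b+1) * cc n a (b+1) (j-1)) • Mop a b) := by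
    rw [T]
    simp only [cc_rec, add_smul, Finset.sum_add_distrib]
  -- piece R1 (the w-term)
  have hR1 : (∑ a ∈ Finset.range (n+2), ∑ b ∈ Finset.range (n+2), ∑ j ∈ Finset.range (n+2),
          (if b = 0 then 0 else (q^(2*n+1)*s) * cc n a (b-1) j) • Mop a b)
      = ∑ a ∈ Finset.range (n+1), ∑ b ∈ Finset.range (n+1), ∑ j ∈ Finset.range (n+1),
          ((q^(2*n+1)*s) * cc n a b j) • Mop a (b+1) := by
    rw [Finset.sum_range_succ]
    have htop : (∑ b ∈ Finset.range (n+2), ∑ j ∈ Finset.range (n+2),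
        (if b = 0 then 0 else (q^(2*n+1)*s) * cc n (n+1) (b-1) j) • Mop (n+1) b) = 0 := by
      refine Finset.sum_eq_zero fun b _ => Finset.sum_eq_zero fun j _ => ?_
      cases b with
      | zero => simp
      | succ b' => rw [if_neg (Nat.succ_ne_zero b'), Nat.succ_sub_one,
          cc_eq_zero (by omega), mul_zero, zero_smul]
    rw [htop, add_zero]
    refine Finset.sum_congr rfl fun a _ => ?_
    rw [Finset.sum_range_succ'
      (fun b => ∑ j ∈ Finset.range (n+2),
        (if b = 0 then 0 else (q^(2*n+1)*s) * cc n a (b-1) j) • Mop a b) (n+1)]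
    have h0 : (∑ j ∈ Finset.range (n+2),
        (if (0:ℕ) = 0 then 0 else (q^(2*n+1)*s) * cc n a (0-1) j) • Mop a 0) = 0 := by
      simp
    rw [h0, add_zero]
    refine Finset.sum_congr rfl fun b _ => ?_
    rw [Finset.sum_range_succ]
    have hj : (if b + 1 = 0 then 0 else (q^(2*n+1)*s) * cc n a (b+1-1) (n+1)) • Mop a (b+1)
        = 0 := by
      rw [if_neg (Nat.succ_ne_zero b), Nat.succ_sub_one, cc_eq_zero (by omega),
        mul_zero, zero_smul]
    rw [hj, add_zero]
    refine Finset.sum_congr rfl fun j _ => ?_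
    rw [if_neg (Nat.succ_ne_zero b), Nat.succ_sub_one]
  -- piece R2 (the q^b X-term)
  have hR2 : (∑ a ∈ Finset.range (n+2), ∑ b ∈ Finset.range (n+2), ∑ j ∈ Finset.range (n+2),
          (if a = 0 then 0 else q^b * cc n (a-1) b j) • Mop a b)
      = ∑ a ∈ Finset.range (n+1), ∑ b ∈ Finset.range (n+1), ∑ j ∈ Finset.range (n+1),
          (q^b * cc n a b j) • Mop (a+1) b := by
    rw [Finset.sum_range_succ'
      (fun a => ∑ b ∈ Finset.range (n+2), ∑ j ∈ Finset.range (n+2),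
        (if a = 0 then 0 else q^b * cc n (a-1) b j) • Mop a b) (n+1)]
    have h0 : (∑ b ∈ Finset.range (n+2), ∑ j ∈ Finset.range (n+2),
        (if (0:ℕ) = 0 then 0 else q^b * cc n (0-1) b j) • Mop 0 b) = 0 := by
      simp
    rw [h0, add_zero]
    refine Finset.sum_congr rfl fun a _ => ?_
    rw [Finset.sum_range_succ]
    have hbtop : (∑ j ∈ Finset.range (n+2),
        (if a + 1 = 0 then 0 else q^(n+1) * cc n (a+1-1) (n+1) j) • Mop (a+1) (n+1)) = 0 := by
      refine Finset.sum_eq_zero fun j _ => ?_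
      rw [if_neg (Nat.succ_ne_zero a), Nat.succ_sub_one, cc_eq_zero (by omega),
        mul_zero, zero_smul]
    rw [hbtop, add_zero]
    refine Finset.sum_congr rfl fun b _ => ?_
    rw [Finset.sum_range_succ]
    have hjtop : (if a + 1 = 0 then 0 else q^b * cc n (a+1-1) b (n+1)) • Mop (a+1) b = 0 := by
      rw [if_neg (Nat.succ_ne_zero a), Nat.succ_sub_one, cc_eq_zero (by omega),
        mul_zero, zero_smul]
    rw [hjtop, add_zero]
    refine Finset.sum_congr rfl fun j _ => ?_
    rw [if_neg (Nat.succ_ne_zero a), Nat.succ_sub_one]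
  -- piece R3 (the contraction term)
  have hR3 : (∑ a ∈ Finset.range (n+2), ∑ b ∈ Finset.range (n+2), ∑ j ∈ Finset.range (n+2),
          (if j = 0 then 0 else qInt (b+1) * cc n a (b+1) (j-1)) • Mop a b)
      = ∑ a ∈ Finset.range (n+1), ∑ b ∈ Finset.range (n+1), ∑ j ∈ Finset.range (n+1),
          (qInt (b+1) * cc n a (b+1) j) • Mop a b := by
    rw [Finset.sum_range_succ]
    have hatop : (∑ b ∈ Finset.range (n+2), ∑ j ∈ Finset.range (n+2),
        (if j = 0 then 0 else qInt (b+1) * cc n (n+1) (b+1) (j-1)) • Mop (n+1) b) = 0 := by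
      refine Finset.sum_eq_zero fun b _ => Finset.sum_eq_zero fun j _ => ?_
      cases j with
      | zero => simp
      | succ j' => rw [if_neg (Nat.succ_ne_zero j'), Nat.succ_sub_one,
          cc_eq_zero (by omega), mul_zero, zero_smul]
    rw [hatop, add_zero]
    refine Finset.sum_congr rfl fun a _ => ?_
    rw [Finset.sum_range_succ]
    have hbtop : (∑ j ∈ Finset.range (n+2),
        (if j = 0 then 0 else qInt (n+1+1) * cc n a (n+1+1) (j-1)) • Mop a (n+1)) = 0 := by
      refine Finset.sum_eq_zero fun j _ => ?_
      cases j with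
      | zero => simp
      | succ j' => rw [if_neg (Nat.succ_ne_zero j'), Nat.succ_sub_one,
          cc_eq_zero (by omega), mul_zero, zero_smul]
    rw [hbtop, add_zero]
    refine Finset.sum_congr rfl fun b _ => ?_
    rw [Finset.sum_range_succ'
      (fun j => (if j = 0 then 0 else qInt (b+1) * cc n a (b+1) (j-1)) • Mop a b) (n+1)]
    have h0 : (if (0:ℕ) = 0 then (0:F) else qInt (b+1) * cc n a (b+1) (0-1)) • Mop a b = 0 := by
      simp
    rw [h0, add_zero]
    refine Finset.sum_congr rfl fun j _ => ?_
    rw [if_neg (Nat.succ_ne_zero j), Nat.succ_sub_one]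
  rw [lhs_eq, hA, rhs_eq, hR1, hR2, hR3]
  abel


def Gop' : ℕ → Module.End F (Polynomial F)
  | 0 => 1
  | n + 1 => Gop' n * (Xop + (q ^ (2 * n + 1) * s) • Dq)

lemma Gop'_eq_T : ∀ n, Gop' n = T n
  | 0 => by
    show (1 : Module.End F (Polynomial F)) = _
    rw [T]
    simp [cc, cf, Mop, Eprod, qFact]
  | n+1 => by
    show Gop' n * _ = _
    rw [Gop'_eq_T n, T_succ]

lemma T_collapse (n : ℕ) : T n
    = ∑ a ∈ Finset.range (n+1), ∑ j ∈ Finset.range (n+1),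
        (if a + 2*j ≤ n then cf n a (n-a-2*j) j • Mop a (n-a-2*j) else 0) := by
  rw [T]
  refine Finset.sum_congr rfl fun a _ => ?_
  rw [Finset.sum_comm]
  refine Finset.sum_congr rfl fun j _ => ?_
  by_cases hle : a + 2*j ≤ n
  · rw [if_pos hle,
      show cf n a (n-a-2*j) j • Mop a (n-a-2*j) = cc n a (n-a-2*j) j • Mop a (n-a-2*j) by
        rw [cc, if_pos (by omega)]]
    apply Finset.sum_eq_single_of_mem (n - a - 2*j) (Finset.mem_range.2 (by omega))
    intro b _ hb
    rw [cc_eq_zero (by omega), zero_smul]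
  · rw [if_neg hle]
    exact Finset.sum_eq_zero fun b _ => by rw [cc_eq_zero (by omega), zero_smul]

lemma coe_eq {n m j : ℕ} (h1 : j ≤ m) (h2 : m + j ≤ n) :
    (q ^ (n^2 + j^2 - (m+j)*n) * qFact n * s^(n-m) /
      (Eprod j * qFact j * qFact (m-j) * qFact (n-m-j)))
    = cf n (m-j) (n-m-j) j := by
  have key : ∀ X Y t : ℕ, Y ≤ X → X + t - Y = (X - Y) + t := fun _ _ _ _ => by omega
  have hmul : (m+j)*n ≤ n*n := Nat.mul_le_mul_right n (by omega)
  have e1 : n^2 + j^2 - (m+j)*n = n*(n-m-j) + j^2 := by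
    rw [pow_two, show n - m - j = n - (m+j) by omega, Nat.mul_sub, Nat.mul_comm n (m+j)]
    exact key (n*n) ((m+j)*n) (j^2) hmul
  have e2 : (n-m-j) + j = n - m := by omega
  rw [cf, e1, e2]

lemma stepB (n : ℕ) :
    (∑ m ∈ Finset.range (n + 1), ∑ j ∈ Finset.range (min m (n - m) + 1),
        (q ^ (n ^ 2 + j ^ 2 - (m + j) * n) * qFact n * s ^ (n - m) /
          (Eprod j * qFact j * qFact (m - j) * qFact (n - m - j))) • Mop (m-j) (n-m-j))
    = ∑ m ∈ Finset.range (n+1), ∑ j ∈ Finset.range (n+1),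
        (if j ≤ m ∧ m + j ≤ n then cf n (m-j) (n-m-j) j • Mop (m-j) (n-m-j) else 0) := by
  refine Finset.sum_congr rfl fun m hm => ?_
  have hmn : m ≤ n := by have := Finset.mem_range.1 hm; omega
  rw [← Finset.sum_subset (Finset.range_subset_range.2 (by omega : min m (n-m) + 1 ≤ n+1))]
  · refine Finset.sum_congr rfl fun j hj => ?_
    have hjm : j ≤ min m (n-m) := by have := Finset.mem_range.1 hj; omega
    rw [if_pos ⟨by omega, by omega⟩, coe_eq (by omega) (by omega)]
  · intro j hjt hjs
    have h1 := Finset.mem_range.1 hjt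
    have h2 : ¬ (j < min m (n-m) + 1) := fun hc => hjs (Finset.mem_range.2 hc)
    rw [if_neg (by omega)]

lemma stepC (n : ℕ) :
    (∑ m ∈ Finset.range (n+1), ∑ j ∈ Finset.range (n+1),
        (if j ≤ m ∧ m + j ≤ n then cf n (m-j) (n-m-j) j • Mop (m-j) (n-m-j) else 0))
    = ∑ a ∈ Finset.range (n+1), ∑ j ∈ Finset.range (n+1),
        (if a + 2*j ≤ n then cf n a (n-a-2*j) j • Mop a (n-a-2*j) else 0) := by
  rw [Finset.sum_comm, Finset.sum_comm
    (s := Finset.range (n+1)) (t := Finset.range (n+1))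
    (f := fun a j => (if a + 2*j ≤ n then cf n a (n-a-2*j) j • Mop a (n-a-2*j) else 0))]
  refine Finset.sum_congr rfl fun j hj => ?_
  have hjn : j ≤ n := by have := Finset.mem_range.1 hj; omega
  rw [show n+1 = j + (n+1-j) by omega, Finset.sum_range_add]
  have hz : (∑ m ∈ Finset.range j,
      (if j ≤ m ∧ m + j ≤ n then cf n (m-j) (n-m-j) j • Mop (m-j) (n-m-j) else 0)) = 0 := by
    refine Finset.sum_eq_zero fun m hm => ?_
    have := Finset.mem_range.1 hm
    rw [if_neg (by omega)]
  rw [hz, zero_add]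
  rw [show j + (n+1-j) = n+1 by omega]  -- restore range for RHS? no-op on LHS index set
  rw [← Finset.sum_subset (Finset.range_subset_range.2 (by omega : n+1-j ≤ n+1))]
  · refine Finset.sum_congr rfl fun i hi => ?_
    by_cases hin : i + 2*j ≤ n
    · rw [if_pos (by omega), if_pos hin]
      rw [show j + i - j = i by omega, show n - (j+i) - j = n - i - 2*j by omega]
    · rw [if_neg (by omega), if_neg hin]
  · intro i hit his
    have h1 := Finset.mem_range.1 hit
    have h2 : ¬ (i < n+1-j) := fun hc => his (Finset.mem_range.2 hc)
    rw [if_neg (by omega)]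


lemma Gop_eq_T : ∀ n, Gop n = T n
  | 0 => by
    show (1 : Module.End F (Polynomial F)) = _
    rw [T]
    simp [cc, cf, Mop, Eprod, qFact]
  | n+1 => by
    show Gop n * _ = _
    rw [Gop_eq_T n, T_succ]


/- STATEMENT 13: normal ordering of G(n) (Corollary 3). -/
theorem Gop_normal_ordering (n : ℕ) :
    Gop n =
      ∑ m ∈ Finset.range (n + 1), ∑ j ∈ Finset.range (min m (n - m) + 1),
        (q ^ (n ^ 2 + j ^ 2 - (m + j) * n) * qFact n * s ^ (n - m) /
          ((∏ i ∈ Finset.range j, (1 + q ^ (i + 1))) * qFact j * qFact (m - j) *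
            qFact (n - m - j))) •
          (Xop ^ (m - j) * Dq ^ (n - m - j)) := by
  rw [Gop_eq_T n, T_collapse, ← stepC, ← stepB]
  simp only [Eprod, Mop]

end
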